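/- Let G be a finite simple graph on vertex set {1,…,n} with edge set E of size m, let c be a positive integer, and let f_c be the associated regression objective. For every subset S ⊆ {1,…,n}, the vector z^S ∈ {−1,+1}^n defined by z^S_j = 1 if j ∈ S and z^S_j = −1 otherwise satisfies f_c(z^S) = 4·(m − cut(S)). Consequently, the infimum over z ∈ ℝ^n of f_c(z) is at most 4·(m − MAXCUT(G)). -/
import Mathlib


open Classical Finset

/-- The regression objective `f_c(z) = Σ_{{u,v}∈E} (z_u + z_v)² + c·Σ_j (|z_j| − 1)²`
associated to a finite simple graph `G` and a positive integer `c`; it equals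
`‖ |Wz| − y ‖₂²` for the corresponding ℓ₂-regression-with-hidden-signs instance. -/
noncomputable def fObj {n : ℕ} (G : SimpleGraph (Fin n)) [Fintype G.edgeSet] (c : ℕ)
    (z : Fin n → ℝ) : ℝ :=
  (∑ e ∈ G.edgeFinset, Sym2.lift ⟨fun u v => (z u + z v) ^ 2, fun u v => by ring⟩ e)
    + c * ∑ j : Fin n, (|z j| - 1) ^ 2

/-- `cutCard G S` is the number of edges of `G` with exactly one endpoint in `S`. -/
noncomputable def cutCard {n : ℕ} (G : SimpleGraph (Fin n)) [Fintype G.edgeSet]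
    (S : Finset (Fin n)) : ℕ :=
  (G.edgeFinset.filter
    (fun e => Sym2.lift ⟨fun u v => ((u ∈ S) ≠ (v ∈ S)), fun u v => propext ne_comm⟩ e)).card

/-- `maxCut G` is the maximum of `cutCard G S` over all vertex subsets `S`. -/
noncomputable def maxCut {n : ℕ} (G : SimpleGraph (Fin n)) [Fintype G.edgeSet] : ℕ :=
  Finset.univ.sup (fun S : Finset (Fin n) => cutCard G S)

/-- Completeness direction of the MAX-CUT reduction: for every subset `S`, the ±1 vector `z^S`
indicating `S` satisfies `f_c(z^S) = 4·(m − cut(S))`; consequently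
`inf_z f_c(z) ≤ 4·(m − MAXCUT(G))`. -/
theorem fObj_completeness {n : ℕ} (G : SimpleGraph (Fin n)) [Fintype G.edgeSet]
    (c : ℕ) (hc : 0 < c) :
    (∀ S : Finset (Fin n),
      fObj G c (fun j => if j ∈ S then (1 : ℝ) else -1)
        = 4 * ((G.edgeFinset.card : ℝ) - cutCard G S)) ∧
    (⨅ z : Fin n → ℝ, fObj G c z) ≤ 4 * ((G.edgeFinset.card : ℝ) - maxCut G) := by
  have key : ∀ S : Finset (Fin n),
      fObj G c (fun j => if j ∈ S then (1 : ℝ) else -1)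
        = 4 * ((G.edgeFinset.card : ℝ) - cutCard G S) := by
    intro S
    have h2 : ∑ j : Fin n, (|(fun j => if j ∈ S then (1 : ℝ) else -1) j| - 1) ^ 2 = 0 := by
      apply Finset.sum_eq_zero
      intro j _
      by_cases hj : j ∈ S <;> simp [hj]
    have h1 : (∑ e ∈ G.edgeFinset,
        Sym2.lift ⟨fun u v => ((fun j => if j ∈ S then (1 : ℝ) else -1) u
          + (fun j => if j ∈ S then (1 : ℝ) else -1) v) ^ 2, fun u v => by ring⟩ e)
        = ∑ e ∈ G.edgeFinset,
          (if Sym2.lift ⟨fun u v => ((u ∈ S) ≠ (v ∈ S)), fun u v => propext ne_comm⟩ e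
            then (0:ℝ) else 4) := by
      apply Finset.sum_congr rfl
      intro e _
      induction e using Sym2.ind with
      | _ u v =>
        by_cases hu : u ∈ S <;> by_cases hv : v ∈ S <;> simp [hu, hv] <;> norm_num
    have hcard := Finset.card_filter_add_card_filter_not
      (s := G.edgeFinset)
      (p := fun e => Sym2.lift ⟨fun u v => ((u ∈ S) ≠ (v ∈ S)), fun u v => propext ne_comm⟩ e)
    rw [fObj, h1, h2, Finset.sum_ite, Finset.sum_const, Finset.sum_const]
    have : ((G.edgeFinset.filter (fun e => ¬ Sym2.lift ⟨fun u v => ((u ∈ S) ≠ (v ∈ S)),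
        fun u v => propext ne_comm⟩ e)).card : ℝ)
        = (G.edgeFinset.card : ℝ) - cutCard G S := by
      rw [cutCard]
      have := hcard
      push_cast [← this]
      ring
    rw [smul_zero, zero_add, mul_zero, add_zero, nsmul_eq_mul, this]
    ring
  refine ⟨key, ?_⟩
  have hbdd : BddBelow (Set.range (fun z : Fin n → ℝ => fObj G c z)) := by
    refine ⟨0, ?_⟩
    rintro x ⟨z, rfl⟩
    have : (0:ℝ) ≤ fObj G c z := by
      apply add_nonneg
      · apply Finset.sum_nonneg
        intro e _
        induction e using Sym2.ind with
        | _ u v => exact sq_nonneg _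
      · exact mul_nonneg (Nat.cast_nonneg c) (Finset.sum_nonneg fun j _ => sq_nonneg _)
    exact this
  obtain ⟨S, _, hS⟩ := Finset.exists_mem_eq_sup (Finset.univ : Finset (Finset (Fin n)))
    ⟨∅, Finset.mem_univ _⟩ (fun S => cutCard G S)
  calc (⨅ z : Fin n → ℝ, fObj G c z)
      ≤ fObj G c (fun j => if j ∈ S then (1 : ℝ) else -1) := ciInf_le hbdd _
    _ = 4 * ((G.edgeFinset.card : ℝ) - cutCard G S) := key S
    _ = 4 * ((G.edgeFinset.card : ℝ) - maxCut G) := by rw [maxCut, hS]
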